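/- Let D⋆ be a global minimizer of J̃ over K and set H⋆ = C − (1/2)[[A,D⋆],A]. Then for every D ∈ K one has Tr(H⋆ D) ≥ Tr(H⋆ D⋆); i.e. D⋆ also minimizes the linear functional D ↦ Tr(H⋆ D) over K, and hence Tr(H⋆ D⋆) = μ₁ + ⋯ + μ_m where μ₁ ≤ ⋯ ≤ μ_M are the eigenvalues of H⋆. -/

import Mathlib

open Matrix Filter Topology

noncomputable section

/-- Commutator of matrices. -/
def commut {M : ℕ} (X Y : Matrix (Fin M) (Fin M) ℝ) : Matrix (Fin M) (Fin M) ℝ :=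
  X * Y - Y * X

/-- `K = CH(Gr(m,ℝ^M))`: symmetric `D` with `0 ⪯ D ⪯ I` and `Tr D = m`. -/
def Kset (M m : ℕ) (D : Matrix (Fin M) (Fin M) ℝ) : Prop :=
  D.PosSemidef ∧ (1 - D).PosSemidef ∧ D.trace = (m : ℝ)

/-- Squared Frobenius norm `‖X‖² = Tr(Xᵀ X)`. -/
def fnormSq {M : ℕ} (X : Matrix (Fin M) (Fin M) ℝ) : ℝ := (Xᵀ * X).trace

/-- The convexified functional `J̃(D) = Tr(CD) + (1/4)‖[A,D]‖²` with `C = B − (1/2)A²`. -/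
def Jt {M : ℕ} (A B D : Matrix (Fin M) (Fin M) ℝ) : ℝ :=
  ((B - (1 / 2 : ℝ) • (A * A)) * D).trace + (1 / 4) * fnormSq (commut A D)

/-- `μ` is the non-decreasing enumeration of the eigenvalues of `S`, with multiplicity. -/
def sortedEigs {M : ℕ} (S : Matrix (Fin M) (Fin M) ℝ) (μ : Fin M → ℝ) : Prop :=
  Monotone μ ∧ ∃ U : Matrix (Fin M) (Fin M) ℝ, U * Uᵀ = 1 ∧ S = U * Matrix.diagonal μ * Uᵀ

/- ------------------ auxiliary lemmas ------------------ -/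

section Aux
variable {M m : ℕ}

lemma psd_diag_nonneg {X : Matrix (Fin M) (Fin M) ℝ} (h : X.PosSemidef) (k : Fin M) :
    0 ≤ X k k := by
  have := h.dotProduct_mulVec_nonneg (Pi.single k 1)
  simpa [dotProduct, mulVec, Pi.single_apply, Finset.sum_ite_eq, Finset.sum_ite_eq'] using this

lemma psd_smul {X : Matrix (Fin M) (Fin M) ℝ} (h : X.PosSemidef) {c : ℝ} (hc : 0 ≤ c) :
    (c • X).PosSemidef := by
  refine Matrix.PosSemidef.of_dotProduct_mulVec_nonneg ?_ fun x => ?_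
  · have := h.1
    simp [Matrix.IsHermitian, conjTranspose_smul] at *
    simp [this]
  · rw [smul_mulVec, dotProduct_smul]
    exact mul_nonneg hc (h.dotProduct_mulVec_nonneg x)

lemma fnormSq_nonneg (X : Matrix (Fin M) (Fin M) ℝ) : 0 ≤ fnormSq X := by
  unfold fnormSq
  rw [Matrix.trace]
  refine Finset.sum_nonneg fun i _ => ?_
  simp only [Matrix.diag_apply, Matrix.mul_apply, Matrix.transpose_apply]
  exact Finset.sum_nonneg fun j _ => mul_self_nonneg _

lemma fnormSq_expand (X Y : Matrix (Fin M) (Fin M) ℝ) (t : ℝ) :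
    fnormSq (X + t • Y) = fnormSq X + 2 * t * ((Xᵀ * Y).trace) + t ^ 2 * fnormSq Y := by
  unfold fnormSq
  have h : (Yᵀ * X).trace = (Xᵀ * Y).trace := by
    rw [← Matrix.trace_transpose (Yᵀ * X), Matrix.transpose_mul, Matrix.transpose_transpose]
  have expand : (X + t • Y)ᵀ * (X + t • Y)
      = Xᵀ * X + t • (Xᵀ * Y) + t • (Yᵀ * X) + (t * t) • (Yᵀ * Y) := by
    simp [Matrix.transpose_add, Matrix.transpose_smul, Matrix.add_mul, Matrix.mul_add,
      smul_mul_assoc, mul_smul_comm, smul_smul]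
    abel
  rw [expand]
  simp [Matrix.trace_add, Matrix.trace_smul, h]
  ring

lemma cross_tr {A D E : Matrix (Fin M) (Fin M) ℝ} (hA : Aᵀ = A) (hD : Dᵀ = D) :
    ((commut A D)ᵀ * (commut A E)).trace = -((commut (commut A D) A * E).trace) := by
  unfold commut
  have hT : (A * D - D * A)ᵀ = -(A * D - D * A) := by
    simp [Matrix.transpose_sub, Matrix.transpose_mul, hA, hD]
  rw [hT]
  set X := A * D - D * A with hX
  have h1 : (X * (E * A)).trace = (A * X * E).trace := by
    rw [← Matrix.mul_assoc, Matrix.trace_mul_cycle]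
  simp [Matrix.sub_mul, Matrix.mul_sub, Matrix.neg_mul, Matrix.trace_sub, h1,
    Matrix.mul_assoc]

lemma commut_add_smul (A D E : Matrix (Fin M) (Fin M) ℝ) (t : ℝ) :
    commut A (D + t • E) = commut A D + t • commut A E := by
  unfold commut
  simp [Matrix.mul_add, Matrix.add_mul, mul_smul_comm, smul_mul_assoc, smul_sub]
  abel

lemma Jt_expand (A B Dstar E : Matrix (Fin M) (Fin M) ℝ) (hA : Aᵀ = A)
    (hDs : Dstarᵀ = Dstar) (t : ℝ) :
    Jt A B (Dstar + t • E) = Jt A B Dstar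
      + t * (((B - (1 / 2 : ℝ) • (A * A) - (1 / 2 : ℝ) • commut (commut A Dstar) A) * E).trace)
      + t ^ 2 * (1 / 4) * fnormSq (commut A E) := by
  unfold Jt
  rw [commut_add_smul, fnormSq_expand, cross_tr hA hDs]
  set C := B - (1 / 2 : ℝ) • (A * A) with hC
  have hlin : (C * (Dstar + t • E)).trace = (C * Dstar).trace + t * (C * E).trace := by
    simp [Matrix.mul_add, mul_smul_comm, Matrix.trace_add, Matrix.trace_smul]
  have hHE : ((C - (1 / 2 : ℝ) • commut (commut A Dstar) A) * E).trace
      = (C * E).trace - (1 / 2) * ((commut (commut A Dstar) A) * E).trace := by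
    simp [Matrix.sub_mul, smul_mul_assoc, Matrix.trace_sub, Matrix.trace_smul]
  rw [hlin, hHE]; ring

lemma Kset_convex {D₀ D₁ : Matrix (Fin M) (Fin M) ℝ} (h0 : Kset M m D₀) (h1 : Kset M m D₁)
    {t : ℝ} (ht0 : 0 ≤ t) (ht1 : t ≤ 1) : Kset M m (D₀ + t • (D₁ - D₀)) := by
  obtain ⟨h0p, h0i, h0t⟩ := h0
  obtain ⟨h1p, h1i, h1t⟩ := h1
  have key : D₀ + t • (D₁ - D₀) = (1 - t) • D₀ + t • D₁ := by module
  refine ⟨?_, ?_, ?_⟩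
  · rw [key]; exact (psd_smul h0p (by linarith)).add (psd_smul h1p ht0)
  · have h2 : 1 - (D₀ + t • (D₁ - D₀)) = (1 - t) • (1 - D₀) + t • (1 - D₁) := by module
    rw [h2]; exact (psd_smul h0i (by linarith)).add (psd_smul h1i ht0)
  · rw [key]
    simp [Matrix.trace_add, Matrix.trace_smul, h0t, h1t]
    ring

lemma trace_diagonal_mul' (μ : Fin M → ℝ) (N : Matrix (Fin M) (Fin M) ℝ) :
    (Matrix.diagonal μ * N).trace = ∑ k, μ k * N k k := by
  simp [Matrix.trace, Matrix.diag, Matrix.diagonal_mul]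

lemma card_filter_lt' (hmM : m ≤ M) :
    (Finset.univ.filter (fun k : Fin M => (k : ℕ) < m)).card = m := by
  have h : Finset.univ.filter (fun k : Fin M => (k : ℕ) < m)
      = Finset.map (Fin.castLEEmb hmM) Finset.univ := by
    ext k
    simp only [Finset.mem_filter, Finset.mem_univ, true_and, Finset.mem_map, Fin.castLEEmb,
      Function.Embedding.coeFn_mk]
    constructor
    · intro hk; exact ⟨⟨(k : ℕ), hk⟩, by simp [Fin.castLE]⟩
    · rintro ⟨j, rfl⟩; simpa using j.isLt
  rw [h, Finset.card_map, Finset.card_univ, Fintype.card_fin]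

/-- Ky-Fan type lower bound: for any `D ∈ K` and any sorted eigen-decomposition
`S = U diag(μ) Uᵀ`, we have `∑_{k<m} μ k ≤ Tr(S D)`. -/
lemma kyfan_lower (hm : m < M) {D U : Matrix (Fin M) (Fin M) ℝ} {μ : Fin M → ℝ}
    (hmono : Monotone μ) (hU : U * Uᵀ = 1) (hD : Kset M m D) :
    ∑ k ∈ Finset.univ.filter (fun k : Fin M => (k : ℕ) < m), μ k
      ≤ ((U * Matrix.diagonal μ * Uᵀ) * D).trace := by
  obtain ⟨hDp, hDi, hDt⟩ := hD
  have hUtU : Uᵀ * U = 1 := mul_eq_one_comm.mp hU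
  set N := Uᵀ * D * U with hN
  -- trace formula
  have htr : ((U * Matrix.diagonal μ * Uᵀ) * D).trace = ∑ k, μ k * N k k := by
    have e1 : (U * Matrix.diagonal μ * Uᵀ) * D = U * Matrix.diagonal μ * (Uᵀ * D) := by
      rw [Matrix.mul_assoc]
    rw [e1, Matrix.trace_mul_cycle U (Matrix.diagonal μ) (Uᵀ * D), Matrix.trace_mul_comm]
    exact trace_diagonal_mul' μ N
  -- properties of the diagonal of N
  have hNpsd : N.PosSemidef := by
    have := hDp.conjTranspose_mul_mul_same U
    rwa [conjTranspose_eq_transpose_of_trivial] at this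
  have hNd0 : ∀ k, 0 ≤ N k k := psd_diag_nonneg hNpsd
  have hNone : (1 - N).PosSemidef := by
    have h2 : Uᵀ * (1 - D) * U = 1 - N := by
      rw [hN]
      simp [Matrix.sub_mul, Matrix.mul_sub, hUtU]
    have := hDi.conjTranspose_mul_mul_same U
    rwa [conjTranspose_eq_transpose_of_trivial, h2] at this
  have hNd1 : ∀ k, N k k ≤ 1 := by
    intro k
    have := psd_diag_nonneg hNone k
    simp only [Matrix.sub_apply, Matrix.one_apply_eq] at this
    linarith
  have hNtr : ∑ k, N k k = (m : ℝ) := by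
    have h1 : N.trace = D.trace := by
      rw [hN, Matrix.trace_mul_cycle Uᵀ D U, hU, Matrix.one_mul]
    have := h1.trans hDt
    simpa [Matrix.trace, Matrix.diag] using this
  -- threshold argument
  set c := μ ⟨m, hm⟩ with hc
  set ind : Fin M → ℝ := fun k => if (k : ℕ) < m then 1 else 0 with hind
  have hsum_ind : ∑ k, ind k = (m : ℝ) := by
    rw [hind, Finset.sum_boole]
    simp [card_filter_lt' hm.le]
  have hsum_filter : ∑ k ∈ Finset.univ.filter (fun k : Fin M => (k : ℕ) < m), μ k
      = ∑ k, μ k * ind k := by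
    rw [hind, Finset.sum_filter]
    congr 1; ext k
    by_cases h : (k : ℕ) < m <;> simp [h]
  have hterm : ∀ k : Fin M, c * (N k k - ind k) ≤ μ k * N k k - μ k * ind k := by
    intro k
    by_cases h : (k : ℕ) < m
    · have hμ : μ k ≤ c := hmono (by simp [Fin.le_def]; omega)
      have : ind k = 1 := by simp [hind, h]
      rw [this]
      nlinarith [hNd1 k]
    · have hμ : c ≤ μ k := hmono (by simp [Fin.le_def]; omega)
      have : ind k = 0 := by simp [hind, h]
      rw [this]
      nlinarith [hNd0 k]
  have hsum : 0 ≤ ∑ k, (μ k * N k k - μ k * ind k) := by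
    have h1 : ∑ k, c * (N k k - ind k) ≤ ∑ k, (μ k * N k k - μ k * ind k) :=
      Finset.sum_le_sum fun k _ => hterm k
    have h2 : ∑ k, c * (N k k - ind k) = 0 := by
      rw [← Finset.mul_sum, Finset.sum_sub_distrib, hNtr, hsum_ind]
      ring
    linarith
  rw [htr, hsum_filter]
  rw [Finset.sum_sub_distrib] at hsum
  linarith

end Aux

/-- if `D⋆` is a global minimizer of `J̃` over `K` and
`H⋆ = C − (1/2)[[A,D⋆],A]`, then `Tr(H⋆ D) ≥ Tr(H⋆ D⋆)` for every `D ∈ K`, and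
`Tr(H⋆ D⋆) = μ₁ + ⋯ + μ_m` for the eigenvalues `μ₁ ≤ ⋯ ≤ μ_M` of `H⋆`. -/
theorem stmt_6 {M m : ℕ} (hM : 2 ≤ M) (hm1 : 1 ≤ m) (hm2 : m ≤ M - 1)
    (A B : Matrix (Fin M) (Fin M) ℝ) (hA : A.IsSymm) (hApsd : A.PosSemidef)
    (hB : B.IsSymm) (Dstar : Matrix (Fin M) (Fin M) ℝ) (hDstar : Kset M m Dstar)
    (hmin : ∀ D : Matrix (Fin M) (Fin M) ℝ, Kset M m D → Jt A B Dstar ≤ Jt A B D)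
    (Hstar : Matrix (Fin M) (Fin M) ℝ)
    (hH : Hstar = (B - (1 / 2 : ℝ) • (A * A)) - (1 / 2 : ℝ) • commut (commut A Dstar) A) :
    (∀ D : Matrix (Fin M) (Fin M) ℝ, Kset M m D →
        (Hstar * Dstar).trace ≤ (Hstar * D).trace) ∧
      ∀ μ : Fin M → ℝ, sortedEigs Hstar μ →
        (Hstar * Dstar).trace =
          ∑ k ∈ Finset.univ.filter (fun k : Fin M => (k : ℕ) < m), μ k := by
  have hmM : m < M := by omega
  have hAT : Aᵀ = A := hA
  have hDsT : Dstarᵀ = Dstar := by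
    have h : Dstarᴴ = Dstar := hDstar.1.1
    rwa [conjTranspose_eq_transpose_of_trivial] at h
  -- Part 1 : first-order optimality
  have part1 : ∀ D : Matrix (Fin M) (Fin M) ℝ, Kset M m D →
      (Hstar * Dstar).trace ≤ (Hstar * D).trace := by
    intro D hD
    set E := D - Dstar with hE
    set L := (Hstar * E).trace with hLdef
    set Q := fnormSq (commut A E) with hQdef
    have hQ0 : 0 ≤ Q := fnormSq_nonneg _
    have key : ∀ t : ℝ, 0 ≤ t → t ≤ 1 → 0 ≤ t * L + t ^ 2 * (1 / 4) * Q := by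
      intro t ht0 ht1
      have hK := Kset_convex hDstar hD ht0 ht1
      have hmin' := hmin _ hK
      rw [Jt_expand A B Dstar E hAT hDsT t, ← hH] at hmin'
      linarith
    have hL0 : 0 ≤ L := by
      by_contra hneg
      push_neg at hneg
      set t := min 1 ((-L) / (Q + 1)) with ht
      have hQ1 : (0 : ℝ) < Q + 1 := by linarith
      have ht0 : 0 < t := lt_min one_pos (div_pos (by linarith) hQ1)
      have ht1 : t ≤ 1 := min_le_left _ _
      have htle : t * (Q + 1) ≤ -L := by
        have h2 := min_le_right 1 ((-L) / (Q + 1))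
        calc t * (Q + 1) ≤ ((-L) / (Q + 1)) * (Q + 1) := by nlinarith
          _ = -L := div_mul_cancel₀ _ (ne_of_gt hQ1)
      have hk := key t ht0.le ht1
      nlinarith [hk, mul_le_mul_of_nonneg_left htle ht0.le,
        mul_nonneg (mul_nonneg ht0.le ht0.le) hQ0,
        mul_pos ht0 (show (0 : ℝ) < -L by linarith)]
    have hsplit : (Hstar * D).trace - (Hstar * Dstar).trace = L := by
      rw [hLdef, hE, Matrix.mul_sub, Matrix.trace_sub]
    linarith
  refine ⟨part1, ?_⟩
  -- Part 2 : value equals sum of the m smallest eigenvalues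
  rintro μ ⟨hmono, U, hU, hS⟩
  have hUtU : Uᵀ * U = 1 := mul_eq_one_comm.mp hU
  -- the candidate minimizer : projection onto the first m eigenvectors
  set ind : Fin M → ℝ := fun k => if (k : ℕ) < m then 1 else 0 with hind
  set P : Matrix (Fin M) (Fin M) ℝ := Matrix.diagonal ind with hP
  set D₀ : Matrix (Fin M) (Fin M) ℝ := U * P * Uᵀ with hD₀
  have hPpsd : P.PosSemidef := by
    rw [hP]
    refine Matrix.posSemidef_diagonal_iff.mpr fun i => ?_
    by_cases h : (i : ℕ) < m <;> simp [hind, h]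
  have hPipsd : (1 - P).PosSemidef := by
    have h1 : (1 : Matrix (Fin M) (Fin M) ℝ) - P = Matrix.diagonal (fun k => 1 - ind k) := by
      rw [hP, ← Matrix.diagonal_one, Matrix.diagonal_sub]
    rw [h1]
    refine Matrix.posSemidef_diagonal_iff.mpr fun i => ?_
    by_cases h : (i : ℕ) < m <;> simp [hind, h]
  have hD₀K : Kset M m D₀ := by
    refine ⟨?_, ?_, ?_⟩
    · have := hPpsd.mul_mul_conjTranspose_same U
      rwa [conjTranspose_eq_transpose_of_trivial, ← hD₀] at this
    · have heq : (1 : Matrix (Fin M) (Fin M) ℝ) - D₀ = U * (1 - P) * Uᵀ := by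
        rw [hD₀]
        simp [Matrix.mul_sub, Matrix.sub_mul, hU]
      rw [heq]
      have := hPipsd.mul_mul_conjTranspose_same U
      rwa [conjTranspose_eq_transpose_of_trivial] at this
    · rw [hD₀, Matrix.trace_mul_cycle, hUtU, Matrix.one_mul, hP, Matrix.trace_diagonal]
      rw [hind, Finset.sum_boole]
      simp [card_filter_lt' hmM.le]
  -- value at D₀
  have hval : (Hstar * D₀).trace
      = ∑ k ∈ Finset.univ.filter (fun k : Fin M => (k : ℕ) < m), μ k := by
    have h1 : Hstar * D₀ = U * (Matrix.diagonal μ * P) * Uᵀ := by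
      rw [hS, hD₀]
      calc U * Matrix.diagonal μ * Uᵀ * (U * P * Uᵀ)
          = U * Matrix.diagonal μ * (Uᵀ * U) * P * Uᵀ := by
            simp only [Matrix.mul_assoc]
        _ = U * (Matrix.diagonal μ * P) * Uᵀ := by
            rw [hUtU]
            simp only [Matrix.mul_one, Matrix.mul_assoc]
    rw [h1, Matrix.trace_mul_cycle, hUtU, Matrix.one_mul, hP,
      Matrix.diagonal_mul_diagonal, Matrix.trace_diagonal]
    rw [Finset.sum_filter]
    congr 1; ext k
    by_cases h : (k : ℕ) < m <;> simp [hind, h]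
  -- combine
  have hub : (Hstar * Dstar).trace ≤
      ∑ k ∈ Finset.univ.filter (fun k : Fin M => (k : ℕ) < m), μ k := by
    rw [← hval]; exact part1 D₀ hD₀K
  have hlb := kyfan_lower hmM hmono hU hDstar
  rw [← hS] at hlb
  linarith

end
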